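/- Let d ∈ ℕ and let Λ = (λ_n)_{n∈ℤ} be an incompressible sequence of complex numbers of density d, and let 0 < ε ≤ (2d)⁻¹. Then every connected component of the union ⋃_{n∈ℤ} D_ε(λ_n) of open discs of radius ε centered at the λ_n contains at most d of the discs; that is, for every connected component C of this union, card{m ∈ ℤ : D_ε(λ_m) ⊆ C} ≤ d. -/

import Mathlib

/-- A sequence `Λ : ℤ → ℂ` is *incompressible of density `d`* if every vertical
strip `[t-1, t+1] × ℝ` contains at most `d` entries of the sequence. -/
def Incompressible (d : ℕ) (Λ : ℤ → ℂ) : Prop :=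
  ∀ t : ℝ, {n : ℤ | |(Λ n).re - t| ≤ 1}.encard ≤ (d : ℕ∞)

lemma aux_measure (d : ℕ) (ε : ℝ) (hε0 : 0 < ε) (hεd : 2 * d * ε ≤ 1)
    (f : ℤ → ℝ) (T : Set ℤ) (hT : T.encard ≤ (d : ℕ∞)) (b c : ℝ)
    (hdisj : Disjoint (Set.Icc b (b+1)) (Set.Ioo c (c+ε)))
    (hcov : Set.Icc b (b+1) ∪ Set.Ioo c (c+ε) ⊆ ⋃ n ∈ T, Set.Ioo (f n - ε) (f n + ε)) :
    False := by
  have hTfin : T.Finite := by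
    rw [← Set.encard_lt_top_iff]
    exact hT.trans_lt (WithTop.coe_lt_top d)
  set F := hTfin.toFinset with hF
  have hFcard : (F.card : ℕ∞) = T.encard := (Set.Finite.encard_eq_coe_toFinset_card hTfin).symm
  have hFd : F.card ≤ d := by
    have := hFcard ▸ hT
    exact_mod_cast this
  have h1 : (ENNReal.ofReal 1) + ENNReal.ofReal ε
      ≤ MeasureTheory.volume (Set.Icc b (b+1) ∪ Set.Ioo c (c+ε)) := by
    rw [MeasureTheory.measure_union hdisj measurableSet_Ioo, Real.volume_Icc, Real.volume_Ioo]
    simp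
  have hbound : MeasureTheory.volume (Set.Icc b (b+1) ∪ Set.Ioo c (c+ε))
      ≤ ENNReal.ofReal 1 := by
    refine le_trans (MeasureTheory.measure_mono hcov) ?_
    have hEq : (⋃ n ∈ T, Set.Ioo (f n - ε) (f n + ε))
        = ⋃ n ∈ F, Set.Ioo (f n - ε) (f n + ε) := by
      simp [hF, Set.Finite.mem_toFinset]
    rw [hEq]
    calc MeasureTheory.volume (⋃ n ∈ F, Set.Ioo (f n - ε) (f n + ε))
        ≤ ∑ n ∈ F, MeasureTheory.volume (Set.Ioo (f n - ε) (f n + ε)) :=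
          MeasureTheory.measure_biUnion_finset_le _ _
      _ = ∑ _n ∈ F, ENNReal.ofReal (2*ε) := by
          refine Finset.sum_congr rfl fun n _ => ?_
          rw [Real.volume_Ioo]
          ring_nf
      _ = (F.card : ENNReal) * ENNReal.ofReal (2*ε) := by
          rw [Finset.sum_const, nsmul_eq_mul]
      _ ≤ (d : ENNReal) * ENNReal.ofReal (2*ε) := by
          gcongr
      _ ≤ ENNReal.ofReal 1 := by
          rw [← ENNReal.ofReal_natCast d, ← ENNReal.ofReal_mul (by positivity)]
          exact ENNReal.ofReal_le_ofReal (by nlinarith)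
  have hle : ENNReal.ofReal 1 + ENNReal.ofReal ε ≤ ENNReal.ofReal 1 + 0 := by
    rw [add_zero]; exact h1.trans hbound
  rw [ENNReal.add_le_add_iff_left (by simp)] at hle
  simp only [nonpos_iff_eq_zero, ENNReal.ofReal_eq_zero] at hle
  linarith

lemma strip_cover (d : ℕ) (Λ : ℤ → ℂ) (hΛ : Incompressible d Λ) (ε : ℝ)
    (hε0 : 0 < ε) (hεhalf : ε ≤ 1/2) (hεd : 2 * d * ε ≤ 1)
    (I : Set ℝ) (hI : ∀ x ∈ I, ∃ n, |x - (Λ n).re| < ε) (b : ℝ)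
    (hb : Set.Icc b (b+1) ⊆ I) (n0 : ℤ) (hn0 : |(Λ n0).re - (b + 1/2)| ≤ 1/2)
    (c : ℝ) (hc1 : Set.Ioo c (c+ε) ⊆ Set.Ioo ((Λ n0).re - ε) ((Λ n0).re + ε))
    (hc2 : Disjoint (Set.Icc b (b+1)) (Set.Ioo c (c+ε))) : False := by
  set T : Set ℤ := {n | |(Λ n).re - (b + 1/2)| ≤ 1} with hTdef
  have hT : T.encard ≤ (d : ℕ∞) := hΛ (b + 1/2)
  apply aux_measure d ε hε0 hεd (fun n => (Λ n).re) T hT b c hc2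
  rintro x (hx | hx)
  · obtain ⟨n, hn⟩ := hI x (hb hx)
    refine Set.mem_biUnion (show n ∈ T from ?_) ?_
    · have hx2 : |x - (b + 1/2)| ≤ 1/2 := by
        rw [abs_le]
        exact ⟨by linarith [hx.1], by linarith [hx.2]⟩
      have h3 : |(Λ n).re - (b + 1/2)| ≤ |(Λ n).re - x| + |x - (b + 1/2)| := abs_sub_le _ _ _
      rw [abs_sub_comm] at hn
      show |(Λ n).re - (b + 1/2)| ≤ 1
      linarith
    · rw [abs_lt] at hn
      exact ⟨by linarith [hn.1], by linarith [hn.2]⟩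
  · refine Set.mem_biUnion (show n0 ∈ T from ?_) (hc1 hx)
    simp only [hTdef, Set.mem_setOf_eq]
    linarith [abs_le.mp hn0]

/-- Every connected component of the union of the discs `D_ε(λ_n)` contains at most
`d` of the discs, provided `0 < ε ≤ (2d)⁻¹` and `Λ` is incompressible of density `d`. -/
theorem stmt0 (d : ℕ) (Λ : ℤ → ℂ) (hΛ : Incompressible d Λ)
    (ε : ℝ) (hε0 : 0 < ε) (hε : ε ≤ (2 * (d : ℝ))⁻¹) :
    ∀ z ∈ ⋃ n : ℤ, Metric.ball (Λ n) ε,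
      {m : ℤ | Metric.ball (Λ m) ε ⊆
          connectedComponentIn (⋃ n : ℤ, Metric.ball (Λ n) ε) z}.encard ≤ (d : ℕ∞) := by
  intro z hz
  have hd : 1 ≤ d := by
    by_contra h
    push_neg at h
    interval_cases d
    norm_num at hε
    linarith
  have hd1 : (1:ℝ) ≤ d := by exact_mod_cast hd
  have h2d : (0:ℝ) < 2*d := by positivity
  have hεd : 2 * d * ε ≤ 1 := by
    have h := mul_le_mul_of_nonneg_left hε h2d.le
    rw [mul_inv_cancel₀ h2d.ne'] at h
    linarith
  have hεhalf : ε ≤ 1/2 := by nlinarith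
  set U := ⋃ n : ℤ, Metric.ball (Λ n) ε with hU
  set C := connectedComponentIn U z with hC
  by_contra hcon
  push_neg at hcon
  have key : ∀ w ∈ C, ∃ n, w ∈ Metric.ball (Λ n) ε := by
    intro w hw
    exact Set.mem_iUnion.mp (connectedComponentIn_subset U z hw)
  have hzC : z ∈ C := mem_connectedComponentIn hz
  obtain ⟨n0, hzn0⟩ := key z hzC
  have hn0S : Metric.ball (Λ n0) ε ⊆ C := by
    have hsub : Metric.ball (Λ n0) ε ⊆ U := Set.subset_iUnion (fun n => Metric.ball (Λ n) ε) n0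
    have hball := (convex_ball (Λ n0) ε).isPreconnected.subset_connectedComponentIn hzn0 hsub
    rwa [connectedComponentIn_eq hzC] at hball
  set t := (Λ n0).re with ht
  have hex : ∃ m, Metric.ball (Λ m) ε ⊆ C ∧ 1 < |(Λ m).re - t| := by
    by_contra h
    push_neg at h
    exact absurd (le_trans (Set.encard_mono fun m hm => h m hm) (hΛ t)) (not_le.mpr hcon)
  obtain ⟨m, hmS, hm1⟩ := hex
  have hCpre : IsPreconnected C := isPreconnected_connectedComponentIn
  have hIpre : IsPreconnected (Complex.re '' C) :=
    hCpre.image _ Complex.continuous_re.continuousOn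
  have hOrd := hIpre.ordConnected
  have htI : t ∈ Complex.re '' C := ⟨Λ n0, hn0S (Metric.mem_ball_self hε0), rfl⟩
  have hmI : (Λ m).re ∈ Complex.re '' C := ⟨Λ m, hmS (Metric.mem_ball_self hε0), rfl⟩
  have hIball : ∀ x ∈ Complex.re '' C, ∃ n, |x - (Λ n).re| < ε := by
    rintro x ⟨w, hw, rfl⟩
    obtain ⟨n, hn⟩ := key w hw
    refine ⟨n, ?_⟩
    have habs : |(w - Λ n).re| ≤ ‖w - Λ n‖ := Complex.abs_re_le_norm _
    have hd' : dist w (Λ n) < ε := Metric.mem_ball.mp hn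
    rw [Complex.dist_eq] at hd'
    calc |w.re - (Λ n).re| = |(w - Λ n).re| := by rw [Complex.sub_re]
      _ ≤ _ := habs
      _ < ε := hd'
  rcases lt_abs.mp hm1 with hcase | hcase
  · -- Re (Λ m) > t + 1
    have hIcc : Set.Icc t (t+1) ⊆ Complex.re '' C := fun x hx =>
      hOrd.out htI hmI ⟨hx.1, by linarith [hx.2]⟩
    refine strip_cover d Λ hΛ ε hε0 hεhalf hεd _ hIball t hIcc n0 ?_ (t - ε) ?_ ?_
    · rw [← ht, abs_le]; constructor <;> linarith
    · intro x hx
      exact ⟨hx.1, by linarith [hx.2, hε0]⟩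
    · rw [Set.disjoint_left]
      rintro x hx1 hx2
      linarith [hx1.1, hx2.2]
  · -- Re (Λ m) < t - 1
    have hIcc : Set.Icc (t-1) (t-1+1) ⊆ Complex.re '' C := fun x hx =>
      hOrd.out hmI htI ⟨by linarith [hx.1], by linarith [hx.2]⟩
    refine strip_cover d Λ hΛ ε hε0 hεhalf hεd _ hIball (t-1) hIcc n0 ?_ t ?_ ?_
    · rw [← ht, abs_le]; constructor <;> linarith
    · intro x hx
      exact ⟨by linarith [hx.1], by linarith [hx.2]⟩
    · rw [Set.disjoint_left]
      rintro x hx1 hx2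
      linarith [hx1.2, hx2.1]
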